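/- For all real numbers u and v, Λ(u) − Λ(v) ≤ 3Λ(π/3), and moreover 3Λ(π/3) < 4Λ(π/4); consequently Λ(u) − Λ(v) < 4Λ(π/4) for all real u, v. (Geometrically: half the volume of the figure-eight knot complement, 3Λ(π/3), is strictly smaller than half the volume of the Whitehead link complement, 4Λ(π/4).) -/

import Mathlib

open Real

/-- The Lobachevsky function `Λ(θ) = -∫₀^θ log|2 sin t| dt`. -/
noncomputable def Lob (θ : ℝ) : ℝ :=
  -∫ t in (0:ℝ)..θ, Real.log |2 * Real.sin t|

open MeasureTheory intervalIntegral Set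

noncomputable def lsin (t : ℝ) : ℝ := Real.log |2 * Real.sin t|

lemma lsin_meas : Measurable lsin :=
  Real.measurable_log.comp ((measurable_sin.const_mul 2).abs)

lemma lsin_int_half : IntervalIntegrable lsin volume 0 (π/2) := by
  have hle : (0:ℝ) ≤ π/2 := by positivity
  rw [intervalIntegrable_iff_integrableOn_Ioc_of_le hle]
  have hg : IntegrableOn (fun t : ℝ => Real.log 2 + Real.sqrt π * t ^ (-(1/2) : ℝ))
      (Ioc 0 (π/2)) volume := by
    have h1 : IntervalIntegrable (fun t : ℝ => t ^ (-(1/2) : ℝ)) volume 0 (π/2) :=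
      intervalIntegrable_rpow' (by norm_num)
    have h2 : IntervalIntegrable (fun t : ℝ => Real.log 2 + Real.sqrt π * t ^ (-(1/2) : ℝ))
        volume 0 (π/2) :=
      (_root_.intervalIntegrable_const (c := Real.log 2)).add (h1.const_mul _)
    rwa [intervalIntegrable_iff_integrableOn_Ioc_of_le hle] at h2
  refine hg.mono' lsin_meas.aestronglyMeasurable ?_
  filter_upwards [ae_restrict_mem measurableSet_Ioc] with t ht
  obtain ⟨ht0, ht2⟩ := ht
  have hπ := pi_pos
  have hsin : 0 < Real.sin t := Real.sin_pos_of_pos_of_lt_pi ht0 (by linarith)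
  have habs : |2 * Real.sin t| = 2 * Real.sin t := abs_of_pos (by linarith)
  have hlow : 4*t/π ≤ 2 * Real.sin t := by
    have h := Real.mul_le_sin ht0.le ht2
    have he : 4*t/π = 2*(2/π*t) := by field_simp; ring
    linarith
  have hratpos : 0 < 4*t/π := by positivity
  rw [Real.norm_eq_abs, lsin, habs, abs_le]
  have hsqt : t ^ (-(1/2) : ℝ) = (Real.sqrt t)⁻¹ := by
    rw [show (-(1/2) : ℝ) = (-1)/2 by norm_num, Real.rpow_div_two_eq_sqrt _ ht0.le,
      Real.rpow_neg_one]
  constructor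
  · have h1 : Real.log (4*t/π) ≤ Real.log (2 * Real.sin t) :=
      Real.log_le_log hratpos hlow
    have h2 : -Real.log (4*t/π) = Real.log (π/(4*t)) := by
      rw [← Real.log_inv, inv_div]
    have h3 : Real.log (π/(4*t)) ≤ Real.sqrt π * t ^ (-(1/2) : ℝ) := by
      have hppos : 0 < π / (4*t) := by positivity
      have h4 : Real.log (π / (4*t)) = 2 * Real.log (Real.sqrt (π / (4*t))) := by
        rw [Real.log_sqrt hppos.le]; ring
      have h5 : Real.log (Real.sqrt (π / (4*t))) ≤ Real.sqrt (π / (4*t)) - 1 :=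
        Real.log_le_sub_one_of_pos (Real.sqrt_pos.2 hppos)
      have h6 : 2 * Real.sqrt (π / (4*t)) = Real.sqrt π * t ^ (-(1/2) : ℝ) := by
        rw [hsqt, Real.sqrt_div pi_pos.le, Real.sqrt_mul (by norm_num : (0:ℝ) ≤ 4),
          show Real.sqrt 4 = 2 by rw [show (4:ℝ) = 2^2 by norm_num, Real.sqrt_sq (by norm_num : (0:ℝ) ≤ 2)]]
        have : Real.sqrt t ≠ 0 := ne_of_gt (Real.sqrt_pos.2 ht0)
        field_simp
      nlinarith [Real.sqrt_nonneg (π/(4*t))]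
    have hl2 : 0 ≤ Real.log 2 := Real.log_nonneg (by norm_num)
    linarith
  · have h1 : Real.log (2 * Real.sin t) ≤ Real.log 2 := by
      have := Real.sin_le_one t
      exact Real.log_le_log (by linarith) (by linarith)
    have : 0 ≤ Real.sqrt π * t ^ (-(1/2) : ℝ) := by positivity
    linarith


lemma lsin_periodic : Function.Periodic lsin π := by
  intro x; simp [lsin, Real.sin_add_pi, mul_neg, abs_neg]

lemma lsin_even (t : ℝ) : lsin (-t) = lsin t := by
  simp [lsin, Real.sin_neg, mul_neg, abs_neg]

lemma lsin_pi_sub (t : ℝ) : lsin (π - t) = lsin t := by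
  simp [lsin, Real.sin_pi_sub]

lemma lsin_int_pi : IntervalIntegrable lsin volume 0 π := by
  apply lsin_int_half.trans
  have h := lsin_int_half.comp_sub_left π
  simp only [lsin_pi_sub] at h
  have e1 : π - π/2 = π/2 := by ring
  rw [e1, sub_zero] at h
  exact h.symm

lemma lsin_int_piece (n : ℤ) : IntervalIntegrable lsin volume (n*π) (n*π + π) := by
  have h := lsin_int_pi.comp_sub_right (n*π)
  have he : (fun x => lsin (x - n*π)) = lsin := by
    funext x; exact lsin_periodic.sub_int_mul_eq n
  rw [he, zero_add] at h
  rwa [add_comm π] at h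

lemma lsin_int_nat (n : ℕ) : IntervalIntegrable lsin volume (-(n*π)) (n*π) := by
  induction n with
  | zero => simp
  | succ n ih =>
    have h1 : IntervalIntegrable lsin volume (-((n+1:ℕ)*π)) (-(n*π)) := by
      have := lsin_int_piece (-(n+1))
      have e1 : ((-(n+1) : ℤ) : ℝ) * π = -((n+1:ℕ)*π) := by push_cast; ring
      rw [e1] at this
      have e2 : -((n+1:ℕ)*π : ℝ) + π = -((n:ℕ)*π) := by push_cast; ring
      rwa [e2] at this
    have h2 : IntervalIntegrable lsin volume ((n:ℕ)*π) ((n+1:ℕ)*π) := by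
      have := lsin_int_piece n
      rw [show ((n:ℤ):ℝ) = (n:ℝ) by push_cast; ring] at this
      have e2 : ((n:ℕ) : ℝ) * π + π = ((n+1:ℕ)*π) := by push_cast; ring
      rwa [e2] at this
    exact (h1.trans ih).trans h2

lemma lsin_int (a b : ℝ) : IntervalIntegrable lsin volume a b := by
  obtain ⟨n, hn⟩ := exists_nat_ge (max |a| |b| / π)
  have hπ := pi_pos
  have hn' : max |a| |b| ≤ n * π := by
    rw [div_le_iff₀ hπ] at hn; linarith
  have hmem : ∀ x : ℝ, |x| ≤ max |a| |b| → x ∈ Set.uIcc (-((n:ℝ)*π)) ((n:ℝ)*π) := by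
    intro x hx
    rw [Set.uIcc_of_le (by nlinarith [abs_nonneg a] : -((n:ℝ)*π) ≤ (n:ℝ)*π)]
    constructor
    · nlinarith [neg_abs_le x]
    · nlinarith [le_abs_self x]
  exact (lsin_int_nat n).mono_set
    (Set.uIcc_subset_uIcc (hmem a (le_max_left _ _)) (hmem b (le_max_right _ _)))

lemma lsin_integral_pi : ∫ t in (0:ℝ)..π, lsin t = 0 := by
  have hπ := pi_pos
  have hsub : ∫ x in (0:ℝ)..(π/2), lsin (2*x) = (2:ℝ)⁻¹ • ∫ x in (0:ℝ)..π, lsin x := by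
    have h := integral_comp_mul_left (a := (0:ℝ)) (b := π/2) lsin (two_ne_zero)
    rw [mul_zero, show (2:ℝ)*(π/2) = π by ring] at h
    exact h
  have hae : ∫ x in (0:ℝ)..(π/2), lsin (2*x)
      = ∫ x in (0:ℝ)..(π/2), (lsin x + lsin (x + π/2)) := by
    apply intervalIntegral.integral_congr_ae
    have h0 : (volume : Measure ℝ) {π/2} = 0 := measure_singleton _
    filter_upwards [measure_eq_zero_iff_ae_notMem.mp h0] with x hx hmem
    rw [Set.uIoc_of_le (by positivity : (0:ℝ) ≤ π/2)] at hmem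
    have hx1 : 0 < x := hmem.1
    have hx2 : x < π/2 := lt_of_le_of_ne hmem.2 (by simpa using hx)
    have hsin : Real.sin x ≠ 0 := ne_of_gt (Real.sin_pos_of_pos_of_lt_pi hx1 (by linarith))
    have hcos : Real.cos x ≠ 0 := ne_of_gt (Real.cos_pos_of_mem_Ioo ⟨by linarith, hx2⟩)
    have key : |2*Real.sin (2*x)| = |2*Real.sin x| * |2*Real.sin (x + π/2)| := by
      rw [Real.sin_two_mul, Real.sin_add_pi_div_two, ← abs_mul]
      congr 1; ring
    unfold lsin
    rw [key, Real.log_mul (by simpa using hsin) (by simp [Real.sin_add_pi_div_two]; exact hcos)]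
  have hadd : ∫ x in (0:ℝ)..(π/2), (lsin x + lsin (x + π/2))
      = (∫ x in (0:ℝ)..(π/2), lsin x) + ∫ x in (0:ℝ)..(π/2), lsin (x + π/2) := by
    apply integral_add (lsin_int _ _)
    have h := (lsin_int (π/2) π).comp_add_right (π/2)
    rwa [show π/2 - π/2 = 0 by ring, show π - π/2 = π/2 by ring] at h
  have hshift : ∫ x in (0:ℝ)..(π/2), lsin (x + π/2) = ∫ x in (π/2)..π, lsin x := by
    have h := integral_comp_add_right (a := (0:ℝ)) (b := π/2) lsin (π/2)
    rwa [zero_add, show π/2 + π/2 = π by ring] at h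
  have hadj : (∫ x in (0:ℝ)..(π/2), lsin x) + ∫ x in (π/2)..π, lsin x
      = ∫ x in (0:ℝ)..π, lsin x :=
    integral_add_adjacent_intervals (lsin_int _ _) (lsin_int _ _)
  have := hsub
  rw [hae, hadd, hshift, hadj] at this
  rw [smul_eq_mul] at this
  linarith

lemma lsin_integral_half : ∫ t in (0:ℝ)..(π/2), lsin t = 0 := by
  have hrefl : ∫ x in (0:ℝ)..(π/2), lsin x = ∫ x in (π/2)..π, lsin x := by
    have h := integral_comp_sub_left (a := (0:ℝ)) (b := π/2) lsin π
    rw [sub_zero, show π - π/2 = π/2 by ring] at h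
    rw [← h]
    apply integral_congr; intro x _; exact (lsin_pi_sub x).symm
  have hadj : (∫ x in (0:ℝ)..(π/2), lsin x) + ∫ x in (π/2)..π, lsin x
      = ∫ x in (0:ℝ)..π, lsin x :=
    integral_add_adjacent_intervals (lsin_int _ _) (lsin_int _ _)
  rw [lsin_integral_pi] at hadj
  linarith [hrefl, hadj]




lemma Lob_eq (θ : ℝ) : Lob θ = -∫ t in (0:ℝ)..θ, lsin t := rfl

lemma Lob_zero : Lob 0 = 0 := by rw [Lob_eq, integral_same, neg_zero]

lemma Lob_pi : Lob π = 0 := by rw [Lob_eq, lsin_integral_pi, neg_zero]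

lemma Lob_half : Lob (π/2) = 0 := by rw [Lob_eq, lsin_integral_half, neg_zero]

lemma Lob_sub (u v : ℝ) : Lob u - Lob v = -∫ t in v..u, lsin t := by
  have h := integral_add_adjacent_intervals (lsin_int 0 v) (lsin_int v u)
  rw [Lob_eq, Lob_eq]
  linarith

lemma Lob_periodic : Function.Periodic Lob π := by
  intro x
  have h := lsin_periodic.intervalIntegral_add_eq x 0
  rw [zero_add] at h
  have h2 := Lob_sub (x + π) x
  rw [h, lsin_integral_pi] at h2
  linarith

lemma Lob_neg (θ : ℝ) : Lob (-θ) = -Lob θ := by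
  have h := integral_comp_neg (a := (0:ℝ)) (b := θ) (f := lsin)
  simp only [lsin_even, neg_zero] at h
  rw [Lob_eq, Lob_eq, h, integral_symm]

lemma sin_ge_half {t : ℝ} (h1 : π/6 ≤ t) (h2 : t ≤ 5*π/6) : 1/2 ≤ Real.sin t := by
  have hπ := pi_pos
  have key : ∀ s : ℝ, π/6 ≤ s → s ≤ π/2 → 1/2 ≤ Real.sin s := by
    intro s hs1 hs2
    have := Real.sin_le_sin_of_le_of_le_pi_div_two (by linarith : -(π/2) ≤ π/6) hs2 hs1
    rwa [Real.sin_pi_div_six] at this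
  rcases le_total t (π/2) with h | h
  · exact key t h1 h
  · have := key (π - t) (by linarith) (by linarith)
    rwa [Real.sin_pi_sub] at this

lemma sin_le_half {t : ℝ} (h1 : 0 ≤ t) (h2 : t ≤ π/6) : Real.sin t ≤ 1/2 := by
  have hπ := pi_pos
  have := Real.sin_le_sin_of_le_of_le_pi_div_two (by linarith : -(π/2) ≤ t) (by linarith) h2
  rwa [Real.sin_pi_div_six] at this

lemma lsin_nonpos {t : ℝ} (h1 : 0 ≤ t) (h2 : t ≤ π/6) : lsin t ≤ 0 := by
  have hπ := pi_pos
  have hs0 : 0 ≤ Real.sin t := Real.sin_nonneg_of_nonneg_of_le_pi h1 (by linarith)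
  have hs : Real.sin t ≤ 1/2 := sin_le_half h1 h2
  unfold lsin
  apply Real.log_nonpos (abs_nonneg _)
  rw [abs_of_nonneg (by linarith)]
  linarith

lemma lsin_nonpos' {t : ℝ} (h1 : 5*π/6 ≤ t) (h2 : t ≤ π) : lsin t ≤ 0 := by
  have hπ := pi_pos
  rw [← lsin_pi_sub]
  exact lsin_nonpos (by linarith) (by linarith)

lemma lsin_nonneg {t : ℝ} (h1 : π/6 ≤ t) (h2 : t ≤ 5*π/6) : 0 ≤ lsin t := by
  have hs := sin_ge_half h1 h2
  unfold lsin
  apply Real.log_nonneg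
  rw [abs_of_nonneg (by linarith)]
  linarith

lemma Lob_mono_of_nonpos {a b : ℝ} (hab : a ≤ b) (h : ∀ t ∈ Icc a b, lsin t ≤ 0) :
    Lob a ≤ Lob b := by
  have h1 : 0 ≤ ∫ t in a..b, -lsin t :=
    integral_nonneg hab (fun u hu => neg_nonneg.2 (h u hu))
  rw [intervalIntegral.integral_neg] at h1
  have h2 := Lob_sub b a
  linarith

lemma Lob_anti_of_nonneg {a b : ℝ} (hab : a ≤ b) (h : ∀ t ∈ Icc a b, 0 ≤ lsin t) :
    Lob b ≤ Lob a := by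
  have h1 : 0 ≤ ∫ t in a..b, lsin t := integral_nonneg hab h
  have h2 := Lob_sub b a
  linarith

lemma Lob_pi6_nonneg : 0 ≤ Lob (π/6) := by
  have hπ := pi_pos
  have := Lob_mono_of_nonpos (a := 0) (b := π/6) (by linarith)
    (fun t ht => lsin_nonpos ht.1 ht.2)
  rw [Lob_zero] at this; exact this

lemma Lob_le_on_Icc {x : ℝ} (h1 : 0 ≤ x) (h2 : x ≤ π) : Lob x ≤ Lob (π/6) := by
  have hπ := pi_pos
  rcases le_total x (π/6) with h | h
  · exact Lob_mono_of_nonpos h (fun t ht => lsin_nonpos (le_trans h1 ht.1) ht.2)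
  rcases le_total x (5*π/6) with h' | h'
  · exact Lob_anti_of_nonneg h (fun t ht => lsin_nonneg ht.1 (le_trans ht.2 h'))
  · have hx : Lob x ≤ Lob π :=
      Lob_mono_of_nonpos h2 (fun t ht => lsin_nonpos' (le_trans h' ht.1) ht.2)
    rw [Lob_pi] at hx
    linarith [Lob_pi6_nonneg]

lemma Lob_5pi6 : Lob (5*π/6) = -Lob (π/6) := by
  have h := Lob_periodic (-(π/6))
  rw [show -(π/6) + π = 5*π/6 by ring, Lob_neg] at h
  exact h

lemma Lob_ge_on_Icc {x : ℝ} (h1 : 0 ≤ x) (h2 : x ≤ π) : -Lob (π/6) ≤ Lob x := by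
  have hπ := pi_pos
  rcases le_total x (π/6) with h | h
  · have hx : Lob 0 ≤ Lob x :=
      Lob_mono_of_nonpos h1 (fun t ht => lsin_nonpos ht.1 (le_trans ht.2 h))
    rw [Lob_zero] at hx
    linarith [Lob_pi6_nonneg]
  rcases le_total x (5*π/6) with h' | h'
  · have hx : Lob (5*π/6) ≤ Lob x :=
      Lob_anti_of_nonneg h' (fun t ht => lsin_nonneg (le_trans h ht.1) ht.2)
    rwa [Lob_5pi6] at hx
  · have hx : Lob (5*π/6) ≤ Lob x :=
      Lob_mono_of_nonpos h' (fun t ht => lsin_nonpos' ht.1 (le_trans ht.2 h2))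
    rwa [Lob_5pi6] at hx

lemma Lob_bounds (x : ℝ) : -Lob (π/6) ≤ Lob x ∧ Lob x ≤ Lob (π/6) := by
  have hπ := pi_pos
  set y := x - ⌊x/π⌋ * π with hy
  have hy0 : 0 ≤ y := Int.sub_floor_div_mul_nonneg x hπ
  have hy1 : y < π := Int.sub_floor_div_mul_lt x hπ
  have hL : Lob y = Lob x := Lob_periodic.sub_int_mul_eq ⌊x/π⌋
  rw [← hL]
  exact ⟨Lob_ge_on_Icc hy0 hy1.le, Lob_le_on_Icc hy0 hy1.le⟩


-- 3 Λ(π/3) = 2 Λ(π/6)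
lemma Lob_triplication : 3 * Lob (π/3) = 2 * Lob (π/6) := by
  have hπ := pi_pos
  have hsub : ∫ x in (0:ℝ)..(π/6), lsin (2*x) = (2:ℝ)⁻¹ • ∫ x in (0:ℝ)..(π/3), lsin x := by
    have h := integral_comp_mul_left (a := (0:ℝ)) (b := π/6) lsin (two_ne_zero)
    rwa [mul_zero, show (2:ℝ)*(π/6) = π/3 by ring] at h
  have hae : ∫ x in (0:ℝ)..(π/6), lsin (2*x)
      = ∫ x in (0:ℝ)..(π/6), (lsin x + lsin (x + π/2)) := by
    apply intervalIntegral.integral_congr_ae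
    apply Filter.Eventually.of_forall
    intro x hmem
    rw [Set.uIoc_of_le (by positivity : (0:ℝ) ≤ π/6)] at hmem
    have hx1 : 0 < x := hmem.1
    have hx2 : x ≤ π/6 := hmem.2
    have hsin : Real.sin x ≠ 0 := ne_of_gt (Real.sin_pos_of_pos_of_lt_pi hx1 (by linarith))
    have hcos : Real.cos x ≠ 0 := ne_of_gt (Real.cos_pos_of_mem_Ioo ⟨by linarith, by linarith⟩)
    have key : |2*Real.sin (2*x)| = |2*Real.sin x| * |2*Real.sin (x + π/2)| := by
      rw [Real.sin_two_mul, Real.sin_add_pi_div_two, ← abs_mul]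
      congr 1; ring
    unfold lsin
    rw [key, Real.log_mul (by simpa using hsin)
      (by simp only [Real.sin_add_pi_div_two]; simpa using hcos)]
  have hadd : ∫ x in (0:ℝ)..(π/6), (lsin x + lsin (x + π/2))
      = (∫ x in (0:ℝ)..(π/6), lsin x) + ∫ x in (0:ℝ)..(π/6), lsin (x + π/2) := by
    apply integral_add (lsin_int _ _)
    have h := (lsin_int (π/2) (2*π/3)).comp_add_right (π/2)
    rwa [show π/2 - π/2 = 0 by ring, show 2*π/3 - π/2 = π/6 by ring] at h
  have hshift : ∫ x in (0:ℝ)..(π/6), lsin (x + π/2) = ∫ x in (π/2)..(2*π/3), lsin x := by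
    have h := integral_comp_add_right (a := (0:ℝ)) (b := π/6) lsin (π/2)
    rwa [zero_add, show π/6 + π/2 = 2*π/3 by ring] at h
  have h2pi3 : Lob (2*π/3) = -Lob (π/3) := by
    have h := Lob_periodic (-(π/3))
    rwa [show -(π/3) + π = 2*π/3 by ring, Lob_neg] at h
  have e1 : ∫ x in (π/2)..(2*π/3), lsin x = Lob (π/2) - Lob (2*π/3) := by
    have := Lob_sub (2*π/3) (π/2); linarith
  have := hsub
  rw [hae, hadd, hshift, e1, h2pi3, Lob_half, smul_eq_mul] at this
  have e2 : ∫ x in (0:ℝ)..(π/6), lsin x = -Lob (π/6) := by rw [Lob_eq]; ring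
  have e3 : ∫ x in (0:ℝ)..(π/3), lsin x = -Lob (π/3) := by rw [Lob_eq]; ring
  rw [e2, e3] at this
  linarith

-- numeric inequality
lemma num_ineq : 9 * Real.log (π/3) + 6 * Real.log 2 + Real.log 5 < 9 := by
  have hπ := pi_pos
  have h1 : Real.log (π/3) ≤ π/3 - 1 := Real.log_le_sub_one_of_pos (by positivity)
  have hpi : π < 3.15 := pi_lt_d2
  have hlog2 : Real.log 2 < 0.6931471808 := Real.log_two_lt_d9
  have hlog2' : 0.6931471803 < Real.log 2 := Real.log_two_gt_d9
  have h10 : Real.log 10 = Real.log 2 + Real.log 5 := by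
    rw [← Real.log_mul (by norm_num) (by norm_num)]; norm_num
  have h10b : Real.log 10 ≤ 2 * (Real.sqrt 10 - 1) := by
    have hs : Real.log (Real.sqrt 10) ≤ Real.sqrt 10 - 1 :=
      Real.log_le_sub_one_of_pos (Real.sqrt_pos.2 (by norm_num))
    rw [Real.log_sqrt (by norm_num)] at hs
    linarith
  have hsq : Real.sqrt 10 < 3.163 := by
    rw [show (3.163:ℝ) = Real.sqrt (3.163^2) by rw [Real.sqrt_sq (by norm_num)]]
    apply Real.sqrt_lt_sqrt (by norm_num)
    norm_num
  linarith

-- Λ(π/6) > π log 2 / 12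
lemma Lob_pi6_gt : π * Real.log 2 / 12 < Lob (π/6) := by
  have hπ := pi_pos
  have hsplit : ∫ t in (0:ℝ)..(π/6), lsin t
      = (∫ t in (0:ℝ)..(π/60), lsin t) + ∫ t in (π/60)..(π/6), lsin t :=
    (integral_add_adjacent_intervals (lsin_int _ _) (lsin_int _ _)).symm
  have hfirst : ∫ t in (0:ℝ)..(π/60), lsin t ≤ 0 := by
    have h1 : 0 ≤ ∫ t in (0:ℝ)..(π/60), -lsin t :=
      integral_nonneg (by positivity) (fun u hu =>
        neg_nonneg.2 (lsin_nonpos hu.1 (by nlinarith [hu.2])))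
    rw [intervalIntegral.integral_neg] at h1
    linarith
  have hsecond : ∫ t in (π/60)..(π/6), lsin t ≤ ∫ t in (π/60)..(π/6), Real.log (2*t) := by
    apply integral_mono_on (by linarith) (lsin_int _ _)
    · apply ContinuousOn.intervalIntegrable
      apply ContinuousOn.log (by fun_prop)
      intro t ht
      rw [Set.uIcc_of_le (by linarith)] at ht
      have : 0 < t := lt_of_lt_of_le (by positivity) ht.1
      positivity
    · intro t ht
      have ht1 : 0 < t := lt_of_lt_of_le (by positivity) ht.1
      have hsin : 0 < Real.sin t := Real.sin_pos_of_pos_of_lt_pi ht1 (by nlinarith [ht.2])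
      unfold lsin
      rw [abs_of_pos (by linarith)]
      exact Real.log_le_log (by linarith) (by nlinarith [Real.sin_le ht1.le])
  have hlogmul : ∫ t in (π/60)..(π/6), Real.log (2*t)
      = (π/6 - π/60) * Real.log 2 + ((π/6) * Real.log (π/6) - (π/60) * Real.log (π/60)
        - π/6 + π/60) := by
    have hcongr : ∫ t in (π/60)..(π/6), Real.log (2*t)
        = ∫ t in (π/60)..(π/6), (Real.log 2 + Real.log t) := by
      apply integral_congr
      intro t ht
      rw [Set.uIcc_of_le (by linarith)] at ht
      have : 0 < t := lt_of_lt_of_le (by positivity) ht.1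
      simpa using Real.log_mul (by norm_num : (2:ℝ) ≠ 0) (ne_of_gt this)
    rw [hcongr, integral_add intervalIntegrable_const
      (intervalIntegrable_log (by
        rw [Set.uIcc_of_le (by linarith)]
        intro hc
        have := hc.1
        nlinarith))]
    rw [intervalIntegral.integral_const, integral_log]
    simp [smul_eq_mul]
  have hL6 : Lob (π/6) = -∫ t in (0:ℝ)..(π/6), lsin t := Lob_eq _
  -- log identities
  have hl6 : Real.log (π/6) = Real.log (π/3) - Real.log 2 := by
    rw [show π/6 = (π/3)/2 by ring, Real.log_div (by positivity) (by norm_num)]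
  have hl20 : Real.log 20 = 2 * Real.log 2 + Real.log 5 := by
    rw [show (20:ℝ) = 2^2*5 by norm_num, Real.log_mul (by norm_num) (by norm_num),
      Real.log_pow]
    push_cast; ring
  have hl60 : Real.log (π/60) = Real.log (π/3) - (2 * Real.log 2 + Real.log 5) := by
    rw [show π/60 = (π/3)/20 by ring, Real.log_div (by positivity) (by norm_num), hl20]
  have hkey : (π/6 - π/60) * Real.log 2 + ((π/6) * Real.log (π/6) - (π/60) * Real.log (π/60)
        - π/6 + π/60)
      = (π/60) * (Real.log 2 + 9 * Real.log (π/3) + Real.log 5 - 9) := by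
    rw [hl6, hl60]; ring
  have hnum := num_ineq
  have hfin : (π/60) * (Real.log 2 + 9 * Real.log (π/3) + Real.log 5 - 9)
      < (π/60) * (-5 * Real.log 2) := by
    apply mul_lt_mul_of_pos_left _ (by positivity)
    linarith
  have hlt : ∫ t in (0:ℝ)..(π/6), lsin t < (π/60) * (-5 * Real.log 2) := by
    rw [hsplit]
    linarith [hsecond, hlogmul, hkey, hfin, hfirst]
  have hre : (π/60) * (-5 * Real.log 2) = -(π * Real.log 2 / 12) := by ring
  rw [hL6]
  linarith

lemma lsin_upper_quarter : ∫ t in (π/6)..(π/4), lsin t ≤ (π/4 - π/6) * (Real.log 2 / 2) := by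
  have hπ := pi_pos
  have h := intervalIntegral.integral_mono_on (a := π/6) (b := π/4)
    (f := lsin) (g := fun _ => Real.log 2 / 2) (by linarith) (lsin_int _ _)
    intervalIntegrable_const ?_
  · rw [intervalIntegral.integral_const, smul_eq_mul] at h
    exact h
  · intro t ht
    have h1 : 1/2 ≤ Real.sin t := sin_ge_half ht.1 (by linarith [ht.2])
    have h2 : Real.sin t ≤ Real.sqrt 2 / 2 := by
      have := Real.sin_le_sin_of_le_of_le_pi_div_two
        (by linarith [ht.1] : -(π/2) ≤ t) (by linarith : π/4 ≤ π/2) ht.2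
      rwa [Real.sin_pi_div_four] at this
    have h3 : Real.log (2 * Real.sin t) ≤ Real.log (Real.sqrt 2) :=
      Real.log_le_log (by linarith) (by linarith)
    rw [Real.log_sqrt (by norm_num)] at h3
    unfold lsin
    rw [abs_of_pos (by linarith)]
    exact h3

theorem stmt_18 :
    (∀ u v : ℝ, Lob u - Lob v ≤ 3 * Lob (π/3)) ∧
    3 * Lob (π/3) < 4 * Lob (π/4) ∧
    (∀ u v : ℝ, Lob u - Lob v < 4 * Lob (π/4)) := by
  have hπ := pi_pos
  have h1 : ∀ u v : ℝ, Lob u - Lob v ≤ 3 * Lob (π/3) := by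
    intro u v
    obtain ⟨hu1, hu2⟩ := Lob_bounds u
    obtain ⟨hv1, hv2⟩ := Lob_bounds v
    have := Lob_triplication
    linarith
  have h2 : 3 * Lob (π/3) < 4 * Lob (π/4) := by
    have hq := lsin_upper_quarter
    have hs := Lob_sub (π/4) (π/6)
    have hg := Lob_pi6_gt
    have he : (π/4 - π/6) * (Real.log 2 / 2) = π * Real.log 2 / 24 := by ring
    have := Lob_triplication
    linarith
  exact ⟨h1, h2, fun u v => lt_of_le_of_lt (h1 u v) h2⟩
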